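/- Let G be a finite simple graph with an orientation D, and let E(G) = P_1 ⊔ ⋯ ⊔ P_k be a partition of its edge set that is faithful to D, i.e., every vertex is the tail of at most one D-oriented edge in each P_i. Suppose i ≠ j, the edge uv ∈ P_i lies on a cycle of the graph (V(G), P_i), and the edge vw ∈ P_j lies on a cycle of the graph (V(G), P_j). Define P′_i = (P_i ∪ {vw}) \ {uv}, P′_j = (P_j ∪ {uv}) \ {vw}, and P′_l = P_l for l ≠ i, j. Then there exists an orientation D′ of G in which every vertex has the same out-degree as in D and such that the partition (P′_1, …, P′_k) is faithful to D′; in particular, every graph (V(G), P′_l) is a pseudoforest. -/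

import Mathlib

open SimpleGraph Walk
set_option linter.unusedSectionVars false

section Pseudo

variable {V : Type*} [DecidableEq V] {H : SimpleGraph V} {f : V → V → Bool}

/-- tail of a dart -/
private def dtail (f : V → V → Bool) (dt : H.Dart) : V :=
  if f dt.fst dt.snd = true then dt.fst else dt.snd

lemma dtail_spec (horient : ∀ x y, H.Adj x y → (f x y = true ↔ f y x = false))
    (dt : H.Dart) :
    ∃ z, f (dtail f dt) z = true ∧ dt.edge = s(dtail f dt, z) ∧ H.Adj (dtail f dt) z := by
  by_cases hb : f dt.fst dt.snd = true
  · have hg : dtail f dt = dt.fst := if_pos hb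
    exact ⟨dt.snd, hg ▸ hb, by rw [hg]; rfl, hg ▸ dt.adj⟩
  · have hg : dtail f dt = dt.snd := if_neg hb
    have hba : f dt.snd dt.fst = true := by
      cases hfb : f dt.snd dt.fst with
      | false => exact absurd ((horient _ _ dt.adj).mpr hfb) hb
      | true => rfl
    refine ⟨dt.fst, hg ▸ hba, ?_, hg ▸ dt.adj.symm⟩
    rw [hg]
    exact Sym2.eq_swap.symm ▸ rfl

lemma closed_mem_tail {a : V} {c : H.Walk a a} (hnil : ¬ c.Nil) {y : V}
    (hy : y ∈ c.support) : y ∈ c.support.tail := by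
  cases c with
  | nil => exact absurd Walk.Nil.nil hnil
  | cons h q =>
    rw [Walk.support_cons] at hy ⊢
    simp only [List.tail_cons]
    rcases List.mem_cons.mp hy with rfl | h'
    · exact q.end_mem_support
    · exact h'

/-- every vertex on a cycle is the tail of an oriented edge of the cycle -/
lemma key (horient : ∀ x y, H.Adj x y → (f x y = true ↔ f y x = false))
    (hfa : ∀ x y y', H.Adj x y → H.Adj x y' → f x y = true → f x y' = true → y = y')
    {a : V} (c : H.Walk a a) (hc : c.IsCycle) {y : V} (hy : y ∈ c.support) :
    ∃ z, f y z = true ∧ s(y, z) ∈ c.edges ∧ H.Adj y z := by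
  classical
  have hednd : c.edges.Nodup := hc.edges_nodup
  have hdnd : c.darts.Nodup := hednd.of_map _
  set A : Finset H.Dart := c.darts.toFinset with hA
  set B : Finset V := c.support.tail.toFinset with hB
  have hcardA : A.card = c.length := by
    rw [hA, List.toFinset_card_of_nodup hdnd, c.length_darts]
  have hcardB : B.card = c.length := by
    rw [hB, List.toFinset_card_of_nodup hc.support_nodup]
    simp [List.length_tail, c.length_support]
  have hmapsto : ∀ dt ∈ A, dtail f dt ∈ B := by
    intro dt hdt
    rw [hA, List.mem_toFinset] at hdt
    have h1 : dtail f dt ∈ c.support := by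
      by_cases hb : f dt.fst dt.snd = true
      · rw [dtail, if_pos hb]; exact c.dart_fst_mem_support_of_mem_darts hdt
      · rw [dtail, if_neg hb]; exact c.dart_snd_mem_support_of_mem_darts hdt
    rw [hB, List.mem_toFinset]
    exact closed_mem_tail hc.not_nil h1
  have hinj : ∀ dt₁ dt₂ (_ : dt₁ ∈ A) (_ : dt₂ ∈ A), dtail f dt₁ = dtail f dt₂ → dt₁ = dt₂ := by
    intro dt₁ dt₂ h₁ h₂ heq
    rw [hA, List.mem_toFinset] at h₁ h₂
    obtain ⟨z₁, hz₁, he₁, ha₁⟩ := dtail_spec horient dt₁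
    obtain ⟨z₂, hz₂, he₂, ha₂⟩ := dtail_spec horient dt₂
    rw [heq] at hz₁ he₁ ha₁
    have hz : z₁ = z₂ := hfa _ _ _ ha₁ ha₂ hz₁ hz₂
    have hedge : dt₁.edge = dt₂.edge := by rw [he₁, he₂, hz]
    have hednd' : (c.darts.map Dart.edge).Nodup := hednd
    exact List.inj_on_of_nodup_map hednd' h₁ h₂ hedge
  have hsurj := Finset.surj_on_of_inj_on_of_card_le (fun dt _ => dtail f dt) hmapsto
    (fun a₁ a₂ h₁ h₂ h => hinj a₁ a₂ h₁ h₂ h) (le_of_eq (hcardB.trans hcardA.symm))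
  have hyB : y ∈ B := by rw [hB, List.mem_toFinset]; exact closed_mem_tail hc.not_nil hy
  obtain ⟨dt, hdtA, hdty⟩ := hsurj y hyB
  rw [hA, List.mem_toFinset] at hdtA
  obtain ⟨z, hz, he, ha⟩ := dtail_spec horient dt
  refine ⟨z, hdty ▸ hz, ?_, hdty ▸ ha⟩
  have : dt.edge ∈ c.edges := List.mem_map_of_mem hdtA
  rw [he] at this
  exact hdty ▸ this

lemma step_lem (horient : ∀ x y, H.Adj x y → (f x y = true ↔ f y x = false))
    (hfa : ∀ x y y', H.Adj x y → H.Adj x y' → f x y = true → f x y' = true → y = y')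
    {b : V} (d : H.Walk b b) (hd : d.IsCycle) {y z : V}
    (hy : y ∈ d.support) (hz : f y z = true) (ha : H.Adj y z) :
    s(y, z) ∈ d.edges ∧ z ∈ d.support := by
  obtain ⟨z', hz', he', ha'⟩ := key horient hfa d hd hy
  have hzz : z = z' := hfa _ _ _ ha ha' hz hz'
  subst hzz
  exact ⟨he', d.snd_mem_support_of_mem_edges he'⟩

lemma L5 (horient : ∀ x y, H.Adj x y → (f x y = true ↔ f y x = false))
    (hfa : ∀ x y y', H.Adj x y → H.Adj x y' → f x y = true → f x y' = true → y = y') :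
    ∀ {x b : V} (p : H.Walk x b), p.support.Nodup → ∀ {a : V}, f x a = true →
      H.Adj x a → a ∉ p.support → ∀ dt ∈ p.darts, f dt.snd dt.fst = true := by
  intro x b p
  induction p with
  | nil => intro _ a _ _ _ dt hdt; simp at hdt
  | @cons u v' b' h q ih =>
    intro hnd a hfua hadj hans dt hdt
    have hfvu : f v' u = true := by
      cases hb : f u v' with
      | true =>
        have : a = v' := hfa _ _ _ hadj h hfua hb
        exact absurd (by rw [this]; exact List.mem_cons_of_mem _ q.start_mem_support) hans
      | false =>
        cases hb' : f v' u with
        | true => rfl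
        | false => exact absurd ((horient _ _ h).mpr hb') (by simp [hb])
    rw [Walk.darts_cons] at hdt
    rcases List.mem_cons.mp hdt with rfl | hdt'
    · exact hfvu
    · rw [Walk.support_cons] at hnd hans
      exact ih (List.Nodup.of_cons hnd) hfvu h.symm
        ((List.nodup_cons.mp hnd).1) dt hdt'

lemma L13 (horient : ∀ x y, H.Adj x y → (f x y = true ↔ f y x = false))
    (hfa : ∀ x y y', H.Adj x y → H.Adj x y' → f x y = true → f x y' = true → y = y') :
    ∀ {s t : V} (p : H.Walk s t), p.support.Nodup →
      (∀ dt ∈ p.darts, f dt.fst dt.snd = true) ∨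
      (∃ dt ∈ p.darts, dt.snd = t ∧ f t dt.fst = true) := by
  intro s t p
  induction p with
  | nil => intro _; left; intro dt hdt; simp at hdt
  | @cons u v' w h q ih =>
    intro hnd
    rw [Walk.support_cons] at hnd
    have hndq : q.support.Nodup := List.Nodup.of_cons hnd
    rcases ih hndq with hfwd | hback
    · by_cases hfuv : f u v' = true
      · left
        intro dt hdt
        rw [Walk.darts_cons] at hdt
        rcases List.mem_cons.mp hdt with rfl | hdt'
        · exact hfuv
        · exact hfwd dt hdt'
      · have hfvu : f v' u = true := by
          cases hb' : f v' u with
          | true => rfl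
          | false => exact absurd ((horient _ _ h).mpr hb') hfuv
        cases q with
        | nil =>
          right
          exact ⟨⟨(u, v'), h⟩, by rw [Walk.darts_cons]; exact List.mem_cons_self, rfl, hfvu⟩
        | @cons _ y₂ _ h₂ r =>
          exfalso
          have h1 : f v' y₂ = true := hfwd ⟨(v', y₂), h₂⟩ (by rw [Walk.darts_cons]; exact List.mem_cons_self)
          have h2 : u = y₂ := hfa _ _ _ h.symm h₂ hfvu h1
          have : u ∈ (Walk.cons h₂ r).support := by
            rw [Walk.support_cons, h2]
            exact List.mem_cons_of_mem _ r.start_mem_support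
          exact (List.nodup_cons.mp hnd).1 this
    · right
      obtain ⟨dt, hdt, h1, h2⟩ := hback
      exact ⟨dt, by rw [Walk.darts_cons]; exact List.mem_cons_of_mem _ hdt, h1, h2⟩

lemma L4F (horient : ∀ x y, H.Adj x y → (f x y = true ↔ f y x = false))
    (hfa : ∀ x y y', H.Adj x y → H.Adj x y' → f x y = true → f x y' = true → y = y') :
    ∀ {s t : V} (p : H.Walk s t), (∀ dt ∈ p.darts, f dt.fst dt.snd = true) →
      ∀ {b : V} (d : H.Walk b b), d.IsCycle → s ∈ d.support →
      ∀ y ∈ p.support, y ∈ d.support := by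
  intro s t p
  induction p with
  | nil =>
    intro _ b d _ hs y hy
    rw [Walk.support_nil] at hy
    rcases List.mem_singleton.mp hy with rfl
    exact hs
  | @cons u v' w h q ih =>
    intro hfwd b d hd hs y hy
    have h1 : f u v' = true := hfwd ⟨(u, v'), h⟩ (by rw [Walk.darts_cons]; exact List.mem_cons_self)
    have hv' : v' ∈ d.support := (step_lem horient hfa d hd hs h1 h).2
    rw [Walk.support_cons] at hy
    rcases List.mem_cons.mp hy with rfl | hy'
    · exact hs
    · exact ih (fun dt hdt => hfwd dt (by rw [Walk.darts_cons]; exact List.mem_cons_of_mem _ hdt))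
        d hd hv' y hy'

lemma L4B (horient : ∀ x y, H.Adj x y → (f x y = true ↔ f y x = false))
    (hfa : ∀ x y y', H.Adj x y → H.Adj x y' → f x y = true → f x y' = true → y = y') :
    ∀ {s t : V} (p : H.Walk s t), (∀ dt ∈ p.darts, f dt.snd dt.fst = true) →
      ∀ {b : V} (d : H.Walk b b), d.IsCycle → t ∈ d.support →
      ∀ y ∈ p.support, y ∈ d.support := by
  intro s t p
  induction p with
  | nil =>
    intro _ b d _ ht y hy
    rw [Walk.support_nil] at hy
    rcases List.mem_singleton.mp hy with rfl
    exact ht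
  | @cons u v' w h q ih =>
    intro hbwd b d hd ht y hy
    have hsub := ih (fun dt hdt => hbwd dt (by rw [Walk.darts_cons]; exact List.mem_cons_of_mem _ hdt))
      d hd ht
    have hv' : v' ∈ d.support := hsub v' q.start_mem_support
    have h1 : f v' u = true := hbwd ⟨(u, v'), h⟩ (by rw [Walk.darts_cons]; exact List.mem_cons_self)
    rw [Walk.support_cons] at hy
    rcases List.mem_cons.mp hy with rfl | hy'
    · exact (step_lem horient hfa d hd hv' h1 h.symm).2
    · exact hsub y hy'
lemma dart_of_edge {x y : V} {a b : V} (p : H.Walk a b) (he : s(x, y) ∈ p.edges) :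
    ∃ dt ∈ p.darts, dt.edge = s(x, y) := by
  have he' : s(x, y) ∈ p.darts.map Dart.edge := he
  obtain ⟨dt, hdt, hde⟩ := List.mem_map.mp he'
  exact ⟨dt, hdt, hde⟩

lemma edge_of_dart {a b : V} (p : H.Walk a b) {dt : H.Dart} (hdt : dt ∈ p.darts) :
    dt.edge ∈ p.edges := List.mem_map_of_mem hdt

lemma dart_edge_eq (dt : H.Dart) : dt.edge = s(dt.fst, dt.snd) := rfl

/-- the two neighbours of a vertex on a cycle, with orientation data -/
lemma incident (horient : ∀ x y, H.Adj x y → (f x y = true ↔ f y x = false))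
    (hfa : ∀ x y y', H.Adj x y → H.Adj x y' → f x y = true → f x y' = true → y = y')
    {a : V} (c : H.Walk a a) (hc : c.IsCycle) {x : V} (hx : x ∈ c.support) :
    ∃ n₁ n₂ : V, H.Adj x n₁ ∧ H.Adj x n₂ ∧ n₁ ≠ n₂ ∧
      (∀ z, s(x, z) ∈ c.edges ↔ (z = n₁ ∨ z = n₂)) ∧
      f x n₁ = true ∧ f x n₂ = false ∧ f n₂ x = true := by
  obtain ⟨c2, hc2, hiff⟩ : ∃ c2 : H.Walk x x, c2.IsCycle ∧ ∀ e, e ∈ c2.edges ↔ e ∈ c.edges :=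
    ⟨c.rotate _ hx, hc.rotate hx, fun e => (c.rotate_edges _ hx).mem_iff⟩
  suffices hsuf : ∃ n₁ n₂ : V, H.Adj x n₁ ∧ H.Adj x n₂ ∧ n₁ ≠ n₂ ∧
      (∀ z, s(x, z) ∈ c2.edges ↔ (z = n₁ ∨ z = n₂)) ∧
      f x n₁ = true ∧ f x n₂ = false ∧ f n₂ x = true by
    obtain ⟨n₁, n₂, h1, h2, h3, h4, h5, h6, h7⟩ := hsuf
    exact ⟨n₁, n₂, h1, h2, h3, fun z => (hiff _).symm.trans (h4 z), h5, h6, h7⟩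
  clear hiff hx
  cases c2 with
  | nil => exact absurd rfl hc2.ne_nil
  | @cons _ y _ h q =>
    -- h : H.Adj x y, q : H.Walk y x
    have hqnd : q.support.Nodup := by
      have := hc2.support_nodup
      rwa [Walk.support_cons, List.tail_cons] at this
    cases hpr : q.reverse with
    | nil =>
      exfalso
      have : q = Walk.nil.reverse := by rw [← hpr, Walk.reverse_reverse]
      rw [Walk.reverse_nil] at this
      subst this
      exact h.ne rfl
    | @cons _ n₂ _ h₂ r =>
      -- h₂ : H.Adj x n₂, r : H.Walk n₂ y
      have hqrev : ∀ e, e ∈ q.edges ↔ e ∈ Walk.edges (Walk.cons h₂ r) := by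
        intro e
        rw [← hpr, Walk.edges_reverse, List.mem_reverse]
      have hxr : x ∉ r.support := by
        have h1 : q.reverse.support.Nodup := by
          rw [Walk.support_reverse]; exact List.nodup_reverse.mpr hqnd
        rw [hpr, Walk.support_cons] at h1
        exact (List.nodup_cons.mp h1).1
      have hchar : ∀ z, s(x, z) ∈ (Walk.cons h q).edges ↔ (z = y ∨ z = n₂) := by
        intro z
        constructor
        · intro hz
          rw [Walk.edges_cons] at hz
          rcases List.mem_cons.mp hz with hz | hz
          · exact Or.inl (Sym2.congr_right.mp hz)
          · rw [hqrev, Walk.edges_cons] at hz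
            rcases List.mem_cons.mp hz with hz | hz
            · exact Or.inr (Sym2.congr_right.mp hz)
            · exact absurd (r.fst_mem_support_of_mem_edges hz) hxr
        · intro hz
          rcases hz with rfl | rfl
          · rw [Walk.edges_cons]; exact List.mem_cons_self
          · rw [Walk.edges_cons]
            refine List.mem_cons_of_mem _ ?_
            rw [hqrev, Walk.edges_cons]
            exact List.mem_cons_self
      have hyn : y ≠ n₂ := by
        intro hyn
        have h1 : s(x, n₂) ∈ q.edges := by
          rw [hqrev, Walk.edges_cons]; exact List.mem_cons_self
        have h2 := hc2.edges_nodup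
        rw [Walk.edges_cons] at h2
        rw [← hyn] at h1
        exact (List.nodup_cons.mp h2).1 h1
      obtain ⟨z, hfz, hze, hza⟩ := key horient hfa _ hc2 (Walk.start_mem_support _)
      rcases (hchar z).mp hze with rfl | rfl
      · -- z = y is the out-neighbour
        refine ⟨z, n₂, h, h₂, hyn, hchar, hfz, ?_, ?_⟩
        · cases hb : f x n₂ with
          | true => exact absurd (hfa _ _ _ h₂ hza hb hfz).symm hyn
          | false => rfl
        · cases hb : f x n₂ with
          | true => exact absurd (hfa _ _ _ h₂ hza hb hfz).symm hyn
          | false =>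
            cases hb' : f n₂ x with
            | true => rfl
            | false => exact absurd ((horient _ _ h₂).mpr hb') (by simp [hb])
      · -- z = n₂ is the out-neighbour
        refine ⟨z, y, h₂, h, fun hh => hyn hh.symm, fun w => (hchar w).trans or_comm, hfz, ?_, ?_⟩
        · cases hb : f x y with
          | true => exact absurd (hfa _ _ _ h hza hb hfz) hyn
          | false => rfl
        · cases hb : f x y with
          | true => exact absurd (hfa _ _ _ h hza hb hfz) hyn
          | false =>
            cases hb' : f y x with
            | true => rfl
            | false => exact absurd ((horient _ _ h).mpr hb') (by simp [hb])
/-- the support of a cycle through a vertex of another cycle is contained in that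
cycle's support -/
lemma W2 (horient : ∀ x y, H.Adj x y → (f x y = true ↔ f y x = false))
    (hfa : ∀ x y y', H.Adj x y → H.Adj x y' → f x y = true → f x y' = true → y = y')
    {a b : V} (c : H.Walk a a) (d : H.Walk b b)
    (hc : c.IsCycle) (hd : d.IsCycle) (hab : a ∈ d.support) :
    ∀ y ∈ c.support, y ∈ d.support := by
  cases c with
  | nil => exact absurd rfl hc.ne_nil
  | @cons _ x _ h p =>
    -- h : H.Adj a x, p : H.Walk x a
    have hpnd : p.support.Nodup := by
      have := hc.support_nodup
      rwa [Walk.support_cons, List.tail_cons] at this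
    by_cases hfax : f a x = true
    · -- forward first edge
      have hx : x ∈ d.support := (step_lem horient hfa d hd hab hfax h).2
      rcases L13 horient hfa p hpnd with hfwd | hback
      · have hsub := L4F horient hfa p hfwd d hd hx
        intro y hy
        rw [Walk.support_cons] at hy
        rcases List.mem_cons.mp hy with rfl | hy'
        · exact hab
        · exact hsub y hy'
      · exfalso
        obtain ⟨dt, hdt, hdsnd, hfadt⟩ := hback
        have hadj1 : H.Adj a dt.fst := by
          have := dt.adj
          rw [hdsnd] at this
          exact this.symm
        have hfx : dt.fst = x := hfa _ _ _ hadj1 h hfadt hfax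
        have hedge : s(x, a) ∈ p.edges := by
          have h1 := edge_of_dart p hdt
          rwa [dart_edge_eq, hfx, hdsnd] at h1
        have hnd := hc.edges_nodup
        rw [Walk.edges_cons] at hnd
        rw [Sym2.eq_swap] at hedge
        exact (List.nodup_cons.mp hnd).1 hedge
    · -- backward first edge
      cases hpr : p.reverse with
      | nil =>
        exfalso
        have : p = Walk.nil.reverse := by rw [← hpr, Walk.reverse_reverse]
        rw [Walk.reverse_nil] at this
        subst this
        exact h.ne rfl
      | @cons _ w _ h₂ r =>
        -- h₂ : H.Adj a w, r : H.Walk w x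
        have hprnd : p.reverse.support.Nodup := by
          rw [Walk.support_reverse]; exact List.nodup_reverse.mpr hpnd
        have hanr : a ∉ r.support := by
          rw [hpr, Walk.support_cons] at hprnd
          exact (List.nodup_cons.mp hprnd).1
        have hrnd : r.support.Nodup := by
          rw [hpr, Walk.support_cons] at hprnd
          exact List.Nodup.of_cons hprnd
        have hprev : ∀ e, e ∈ p.edges ↔ e ∈ Walk.edges (Walk.cons h₂ r) := by
          intro e
          rw [← hpr, Walk.edges_reverse, List.mem_reverse]
        -- a's out-edge on the cycle is s(a, w)
        obtain ⟨z, hfz, hze, hza⟩ := key horient hfa _ hc (Walk.start_mem_support _)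
        have hzx : z ≠ x := fun hzx => hfax (hzx ▸ hfz)
        have h1 : s(a, z) ∈ p.edges := by
          rw [Walk.edges_cons] at hze
          rcases List.mem_cons.mp hze with hz1 | hz1
          · exact absurd (Sym2.congr_right.mp hz1) hzx
          · exact hz1
        rw [hprev, Walk.edges_cons] at h1
        have hzw : z = w := by
          rcases List.mem_cons.mp h1 with h2 | h2
          · exact Sym2.congr_right.mp h2
          · exact absurd (r.fst_mem_support_of_mem_edges h2) hanr
        subst hzw
        have hw : z ∈ d.support := (step_lem horient hfa d hd hab hfz hza).2
        have hfxa : f x a = true := by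
          cases hb' : f x a with
          | true => rfl
          | false => exact absurd ((horient _ _ h).mpr hb') (by simp [hfax])
        rcases L13 horient hfa r hrnd with hfwd | hback
        · have hsub := L4F horient hfa r hfwd d hd hw
          intro y hy
          rw [Walk.support_cons] at hy
          rcases List.mem_cons.mp hy with rfl | hy'
          · exact hab
          · have : y ∈ p.reverse.support := by
              rw [Walk.support_reverse, List.mem_reverse]; exact hy'
            rw [hpr, Walk.support_cons] at this
            rcases List.mem_cons.mp this with rfl | hy''
            · exact hab
            · exact hsub y hy''
        · exfalso
          obtain ⟨dt, hdt, hdsnd, hfdt⟩ := hback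
          have hadj1 : H.Adj x dt.fst := by
            have := dt.adj
            rw [hdsnd] at this
            exact this.symm
          have : dt.fst = a := hfa _ _ _ hadj1 h.symm hfdt hfxa
          apply hanr
          rw [← this]
          exact r.dart_fst_mem_support_of_mem_darts hdt

lemma E1 (horient : ∀ x y, H.Adj x y → (f x y = true ↔ f y x = false))
    (hfa : ∀ x y y', H.Adj x y → H.Adj x y' → f x y = true → f x y' = true → y = y')
    {a b : V} (c : H.Walk a a) (d : H.Walk b b)
    (hc : c.IsCycle) (hd : d.IsCycle) (hsub : ∀ y ∈ c.support, y ∈ d.support) :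
    ∀ e ∈ c.edges, e ∈ d.edges := by
  intro e he
  have he' : e ∈ c.darts.map Dart.edge := he
  obtain ⟨dt, hdt, rfl⟩ := List.mem_map.mp he'
  have hadj := dt.adj
  by_cases hb : f dt.fst dt.snd = true
  · have h1 : dt.fst ∈ c.support := c.dart_fst_mem_support_of_mem_darts hdt
    exact (step_lem horient hfa d hd (hsub _ h1) hb hadj).1
  · have hb' : f dt.snd dt.fst = true := by
      cases hb2 : f dt.snd dt.fst with
      | true => rfl
      | false => exact absurd ((horient _ _ hadj).mpr hb2) hb
    have h1 : dt.snd ∈ c.support := c.dart_snd_mem_support_of_mem_darts hdt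
    have h2 := (step_lem horient hfa d hd (hsub _ h1) hb' hadj.symm).1
    rwa [dart_edge_eq, Sym2.eq_swap]

/-- two cycles sharing a vertex have the same edges -/
lemma Beq (horient : ∀ x y, H.Adj x y → (f x y = true ↔ f y x = false))
    (hfa : ∀ x y y', H.Adj x y → H.Adj x y' → f x y = true → f x y' = true → y = y')
    {a b x : V} (c : H.Walk a a) (d : H.Walk b b)
    (hc : c.IsCycle) (hd : d.IsCycle) (hxc : x ∈ c.support) (hxd : x ∈ d.support) :
    ∀ e, e ∈ c.edges ↔ e ∈ d.edges := by
  set c2 := c.rotate _ hxc with hc2def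
  set d2 := d.rotate _ hxd with hd2def
  have hc2 : c2.IsCycle := hc.rotate hxc
  have hd2 : d2.IsCycle := hd.rotate hxd
  have hce : ∀ e, e ∈ c2.edges ↔ e ∈ c.edges := fun e => (c.rotate_edges _ hxc).mem_iff
  have hde : ∀ e, e ∈ d2.edges ↔ e ∈ d.edges := fun e => (d.rotate_edges _ hxd).mem_iff
  have hsub1 := W2 horient hfa c2 d2 hc2 hd2 (Walk.start_mem_support _)
  have hsub2 := W2 horient hfa d2 c2 hd2 hc2 (Walk.start_mem_support _)
  intro e
  constructor
  · intro he
    exact (hde e).mp (E1 horient hfa c2 d2 hc2 hd2 hsub1 e ((hce e).mpr he))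
  · intro he
    exact (hce e).mp (E1 horient hfa d2 c2 hd2 hc2 hsub2 e ((hde e).mpr he))

/-- main lemma: cycles at the two ends of a path have the same edges -/
lemma L1 (horient : ∀ x y, H.Adj x y → (f x y = true ↔ f y x = false))
    (hfa : ∀ x y y', H.Adj x y → H.Adj x y' → f x y = true → f x y' = true → y = y') :
    ∀ {aa bb : V} (p : H.Walk aa bb), p.IsPath →
      ∀ (c : H.Walk aa aa) (d : H.Walk bb bb), c.IsCycle → d.IsCycle →
      ∀ e, e ∈ c.edges ↔ e ∈ d.edges := by
  intro aa bb p
  induction p with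
  | nil =>
    intro _ c d hc hd
    exact Beq horient hfa c d hc hd (Walk.start_mem_support _) (Walk.start_mem_support _)
  | @cons a x b h q ih =>
    intro hp c d hc hd
    have hq : q.IsPath := hp.of_cons
    have hanq : a ∉ q.support := ((Walk.cons_isPath_iff h q).mp hp).2
    by_cases hfax : f a x = true
    · obtain ⟨z, hfz, hze, hza⟩ := key horient hfa c hc (Walk.start_mem_support _)
      have hzx : z = x := hfa _ _ _ hza h hfz hfax
      subst hzx
      have hxc : z ∈ c.support := c.snd_mem_support_of_mem_edges hze
      have hc2 : (c.rotate _ hxc).IsCycle := hc.rotate hxc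
      have hce : ∀ e, e ∈ (c.rotate _ hxc).edges ↔ e ∈ c.edges :=
        fun e => (c.rotate_edges _ hxc).mem_iff
      intro e
      rw [← hce e]
      exact ih hq (c.rotate _ hxc) d hc2 hd e
    · have hfxa : f x a = true := by
        cases hb' : f x a with
        | true => rfl
        | false => exact absurd ((horient _ _ h).mpr hb') (by simp [hfax])
      have hback := L5 horient hfa q hq.support_nodup hfxa h.symm hanq
      have hxd : x ∈ d.support := L4B horient hfa q hback d hd (Walk.end_mem_support _)
        x (Walk.start_mem_support _)
      have had : a ∈ d.support := (step_lem horient hfa d hd hxd hfxa h.symm).2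
      exact Beq horient hfa c d hc hd (Walk.start_mem_support _) had
/-- reversing the orientation along a cycle preserves out-degrees -/
lemma flip_card [Fintype V]
    (horient : ∀ x y, H.Adj x y → (f x y = true ↔ f y x = false))
    (hfa : ∀ x y y', H.Adj x y → H.Adj x y' → f x y = true → f x y' = true → y = y')
    {a : V} (c : H.Walk a a) (hc : c.IsCycle) (x : V) :
    (Finset.univ.filter fun y => (if s(x, y) ∈ c.edges then f y x else f x y) = true).card
      = (Finset.univ.filter fun y => f x y = true).card := by
  by_cases hx : x ∈ c.support
  · obtain ⟨n₁, n₂, ha1, ha2, hne, hchar, hf1, hf2, hf3⟩ := incident horient hfa c hc hx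
    have hf1' : f n₁ x = false := (horient _ _ ha1).mp hf1
    have hset : (Finset.univ.filter fun y => (if s(x, y) ∈ c.edges then f y x else f x y) = true)
        = insert n₂ ((Finset.univ.filter fun y => f x y = true).erase n₁) := by
      ext y
      simp only [Finset.mem_filter, Finset.mem_univ, true_and, Finset.mem_insert,
        Finset.mem_erase]
      by_cases hy : s(x, y) ∈ c.edges
      · rw [if_pos hy]
        rcases (hchar y).mp hy with rfl | rfl
        · simp [hf1', hf2, hne, Ne.symm hne]
        · simp [hf3]
      · rw [if_neg hy]
        have hy1 : y ≠ n₁ := fun h => hy ((hchar y).mpr (Or.inl h))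
        have hy2 : y ≠ n₂ := fun h => hy ((hchar y).mpr (Or.inr h))
        simp [hy1, hy2]
    have hn₁ : n₁ ∈ (Finset.univ.filter fun y => f x y = true) := by simp [hf1]
    have hn₂ : n₂ ∉ ((Finset.univ.filter fun y => f x y = true).erase n₁) := by
      simp [hf2]
    rw [hset, Finset.card_insert_of_notMem hn₂, Finset.card_erase_of_mem hn₁]
    exact Nat.succ_pred_eq_of_pos (Finset.card_pos.mpr ⟨n₁, hn₁⟩)
  · congr 1
    apply Finset.filter_congr
    intro y _
    rw [if_neg (fun h => hx (c.fst_mem_support_of_mem_edges h))]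

/-- reversing the orientation along a cycle preserves faithfulness -/
lemma flip_faith
    (horient : ∀ x y, H.Adj x y → (f x y = true ↔ f y x = false))
    (hfa : ∀ x y y', H.Adj x y → H.Adj x y' → f x y = true → f x y' = true → y = y')
    {a : V} (c : H.Walk a a) (hc : c.IsCycle) {x y y' : V}
    (hxy : H.Adj x y) (hxy' : H.Adj x y')
    (h1 : (if s(x, y) ∈ c.edges then f y x else f x y) = true)
    (h2 : (if s(x, y') ∈ c.edges then f y' x else f x y') = true) : y = y' := by
  by_cases hm1 : s(x, y) ∈ c.edges <;> by_cases hm2 : s(x, y') ∈ c.edges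
  · rw [if_pos hm1] at h1; rw [if_pos hm2] at h2
    obtain ⟨n₁, n₂, ha1, ha2, hne, hchar, hf1, hf2, hf3⟩ :=
      incident horient hfa c hc (c.fst_mem_support_of_mem_edges hm1)
    have hf1' : f n₁ x = false := (horient _ _ ha1).mp hf1
    have hy : y = n₂ := by
      rcases (hchar y).mp hm1 with rfl | rfl
      · rw [hf1'] at h1; exact absurd h1 (by simp)
      · rfl
    have hy' : y' = n₂ := by
      rcases (hchar y').mp hm2 with rfl | rfl
      · rw [hf1'] at h2; exact absurd h2 (by simp)
      · rfl
    rw [hy, hy']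
  · exfalso
    rw [if_pos hm1] at h1; rw [if_neg hm2] at h2
    obtain ⟨n₁, n₂, ha1, ha2, hne, hchar, hf1, hf2, hf3⟩ :=
      incident horient hfa c hc (c.fst_mem_support_of_mem_edges hm1)
    have : y' = n₁ := hfa _ _ _ hxy' ha1 h2 hf1
    exact hm2 ((hchar y').mpr (Or.inl this))
  · exfalso
    rw [if_neg hm1] at h1; rw [if_pos hm2] at h2
    obtain ⟨n₁, n₂, ha1, ha2, hne, hchar, hf1, hf2, hf3⟩ :=
      incident horient hfa c hc (c.fst_mem_support_of_mem_edges hm2)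
    have : y = n₁ := hfa _ _ _ hxy ha1 h1 hf1
    exact hm1 ((hchar y).mpr (Or.inl this))
  · rw [if_neg hm1] at h1; rw [if_neg hm2] at h2
    exact hfa _ _ _ hxy hxy' h1 h2
end Pseudo

/-- A graph is a pseudoforest if every connected component contains at most one cycle:
any two cycles lying in the same component have the same edge set. -/
def IsPseudoforest {V : Type*} (H : SimpleGraph V) : Prop :=
  ∀ ⦃u v : V⦄ (c : H.Walk u u) (d : H.Walk v v),
    c.IsCycle → d.IsCycle → H.Reachable u v → ∀ e, e ∈ c.edges ↔ e ∈ d.edges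

/-- a graph admitting an orientation with out-degree at most one is a pseudoforest -/
lemma pseudo_of {V : Type*} [DecidableEq V] {H : SimpleGraph V} {f : V → V → Bool}
    (horient : ∀ x y, H.Adj x y → (f x y = true ↔ f y x = false))
    (hfa : ∀ x y y', H.Adj x y → H.Adj x y' → f x y = true → f x y' = true → y = y') :
    IsPseudoforest H := by
  intro u v c d hc hd hr e
  obtain ⟨p⟩ := hr
  exact L1 horient hfa p.toPath.1 p.toPath.2 c d hc hd e

/-- Let `P_1 ⊔ ⋯ ⊔ P_k` be a partition of `E(G)` faithful to an orientation
`D`. If `i ≠ j`, `uv ∈ P_i` lies on a cycle of `(V, P_i)` and `vw ∈ P_j` lies on a cycle of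
`(V, P_j)`, then after swapping `uv` and `vw` between `P_i` and `P_j` there is an orientation
`D′` with the same out-degrees as `D` to which the new partition is faithful; in particular
every new part spans a pseudoforest. -/
theorem stmt_10 {V : Type*} [Fintype V] [DecidableEq V]
    (G : SimpleGraph V) (k : ℕ)
    (o : V → V → Bool)
    (ho1 : ∀ x y, o x y = true → G.Adj x y)
    (ho2 : ∀ x y, G.Adj x y → (o x y = true ↔ o y x = false))
    (P : Fin k → Set (Sym2 V))
    (hPsub : ∀ l, P l ⊆ G.edgeSet)
    (hPpart : ∀ e ∈ G.edgeSet, ∃! l, e ∈ P l)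
    (hfaith : ∀ (l : Fin k) (x y y' : V), o x y = true → o x y' = true →
      s(x, y) ∈ P l → s(x, y') ∈ P l → y = y')
    (i j : Fin k) (hij : i ≠ j)
    (u v w : V)
    (huv : s(u, v) ∈ P i) (hvw : s(v, w) ∈ P j)
    (hcyci : ∃ (x : V) (c : (SimpleGraph.fromEdgeSet (P i)).Walk x x),
      c.IsCycle ∧ s(u, v) ∈ c.edges)
    (hcycj : ∃ (x : V) (c : (SimpleGraph.fromEdgeSet (P j)).Walk x x),
      c.IsCycle ∧ s(v, w) ∈ c.edges)
    (P' : Fin k → Set (Sym2 V))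
    (hP' : ∀ l, P' l = if l = i then (P i ∪ {s(v, w)}) \ {s(u, v)}
      else if l = j then (P j ∪ {s(u, v)}) \ {s(v, w)} else P l) :
    ∃ o' : V → V → Bool,
      (∀ x y, o' x y = true → G.Adj x y) ∧
      (∀ x y, G.Adj x y → (o' x y = true ↔ o' y x = false)) ∧
      (∀ x, (Finset.univ.filter (fun y => o' x y = true)).card
          = (Finset.univ.filter (fun y => o x y = true)).card) ∧
      (∀ (l : Fin k) (x y y' : V), o' x y = true → o' x y' = true →
        s(x, y) ∈ P' l → s(x, y') ∈ P' l → y = y') ∧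
      (∀ l, IsPseudoforest (SimpleGraph.fromEdgeSet (P' l))) := by
  classical
  obtain ⟨xi, ci, hci, huvci⟩ := hcyci
  obtain ⟨xj, cj, hcj, hvwcj⟩ := hcycj
  have hadjmem : ∀ (l : Fin k) (x y : V), s(x, y) ∈ P l → G.Adj x y := fun l x y hm =>
    G.mem_edgeSet.mp (hPsub l hm)
  have hdisj : ∀ (l m : Fin k), l ≠ m → ∀ e, e ∈ P l → e ∈ P m → False := by
    intro l m hlm e hel hem
    obtain ⟨l', -, huniq⟩ := hPpart e (hPsub l hel)
    exact hlm ((huniq l hel).trans (huniq m hem).symm)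
  have hHiadj : ∀ x y : V, (SimpleGraph.fromEdgeSet (P i)).Adj x y ↔ s(x, y) ∈ P i := by
    intro x y
    rw [SimpleGraph.fromEdgeSet_adj]
    exact ⟨And.left, fun hm => ⟨hm, (hadjmem i x y hm).ne⟩⟩
  have hHjadj : ∀ x y : V, (SimpleGraph.fromEdgeSet (P j)).Adj x y ↔ s(x, y) ∈ P j := by
    intro x y
    rw [SimpleGraph.fromEdgeSet_adj]
    exact ⟨And.left, fun hm => ⟨hm, (hadjmem j x y hm).ne⟩⟩
  have horienti : ∀ x y, (SimpleGraph.fromEdgeSet (P i)).Adj x y →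
      (o x y = true ↔ o y x = false) :=
    fun x y hxy => ho2 x y (hadjmem i x y ((hHiadj x y).mp hxy))
  have hfai : ∀ x y y', (SimpleGraph.fromEdgeSet (P i)).Adj x y →
      (SimpleGraph.fromEdgeSet (P i)).Adj x y' → o x y = true → o x y' = true → y = y' :=
    fun x y y' h h' hb hb' =>
      hfaith i x y y' hb hb' ((hHiadj _ _).mp h) ((hHiadj _ _).mp h')
  have hciP : ∀ e ∈ ci.edges, e ∈ P i := by
    intro e he
    have h1 := ci.edges_subset_edgeSet he
    rw [SimpleGraph.edgeSet_fromEdgeSet] at h1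
    exact h1.1
  have hcjP : ∀ e ∈ cj.edges, e ∈ P j := by
    intro e he
    have h1 := cj.edges_subset_edgeSet he
    rw [SimpleGraph.edgeSet_fromEdgeSet] at h1
    exact h1.1
  have hvwnotci : s(v, w) ∉ ci.edges := fun h => hdisj i j hij _ (hciP _ h) hvw
  have huvnotcj : s(u, v) ∉ cj.edges := fun h => hdisj j i hij.symm _ (hcjP _ h) huv
  have hGuv : G.Adj u v := hadjmem i u v huv
  have hGvw : G.Adj v w := hadjmem j v w hvw
  have hvu_eq : s(v, u) = s(u, v) := Sym2.eq_swap
  have hwv_eq : s(w, v) = s(v, w) := Sym2.eq_swap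
  set o1 : V → V → Bool :=
    fun x y => if o u v = true ∧ s(x, y) ∈ ci.edges then o y x else o x y with ho1def
  set o2 : V → V → Bool :=
    fun x y => if o w v = true ∧ s(x, y) ∈ cj.edges then o1 y x else o1 x y with ho2def
  have ho1_off : ∀ x y, s(x, y) ∉ ci.edges → o1 x y = o x y := by
    intro x y h
    simp only [ho1def]
    rw [if_neg (fun hh => h hh.2)]
  have ho2_off : ∀ x y, s(x, y) ∉ cj.edges → o2 x y = o1 x y := by
    intro x y h
    simp only [ho2def]
    rw [if_neg (fun hh => h hh.2)]
  have ho1_Pj : ∀ x y, s(x, y) ∈ P j → o1 x y = o x y := fun x y h =>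
    ho1_off x y (fun hh => hdisj i j hij _ (hciP _ hh) h)
  have ho2_Pi : ∀ x y, s(x, y) ∈ P i → o2 x y = o1 x y := fun x y h =>
    ho2_off x y (fun hh => hdisj j i hij.symm _ (hcjP _ hh) h)
  have horientj1 : ∀ x y, (SimpleGraph.fromEdgeSet (P j)).Adj x y →
      (o1 x y = true ↔ o1 y x = false) := by
    intro x y hxy
    have hm := (hHjadj x y).mp hxy
    rw [ho1_Pj x y hm, ho1_Pj y x (by rwa [Sym2.eq_swap])]
    exact ho2 x y (hadjmem j x y hm)
  have hfaj1 : ∀ x y y', (SimpleGraph.fromEdgeSet (P j)).Adj x y →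
      (SimpleGraph.fromEdgeSet (P j)).Adj x y' → o1 x y = true → o1 x y' = true → y = y' := by
    intro x y y' h h' hb hb'
    have hm := (hHjadj _ _).mp h
    have hm' := (hHjadj _ _).mp h'
    rw [ho1_Pj x y hm] at hb
    rw [ho1_Pj x y' hm'] at hb'
    exact hfaith j x y y' hb hb' hm hm'
  -- conjunct 2
  have hco2 : ∀ x y, G.Adj x y → (o2 x y = true ↔ o2 y x = false) := by
    intro x y hadj
    have hsw : s(y, x) = s(x, y) := Sym2.eq_swap
    simp only [ho2def, ho1def, hsw]
    by_cases h2 : o w v = true ∧ s(x, y) ∈ cj.edges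
    · rw [if_pos h2, if_pos h2]
      by_cases h1 : o u v = true ∧ s(x, y) ∈ ci.edges
      · rw [if_pos h1, if_pos h1]
        exact ho2 x y hadj
      · rw [if_neg h1, if_neg h1]
        exact ho2 y x hadj.symm
    · rw [if_neg h2, if_neg h2]
      by_cases h1 : o u v = true ∧ s(x, y) ∈ ci.edges
      · rw [if_pos h1, if_pos h1]
        exact ho2 y x hadj.symm
      · rw [if_neg h1, if_neg h1]
        exact ho2 x y hadj
  -- conjunct 1
  have hco1 : ∀ x y, o2 x y = true → G.Adj x y := by
    intro x y h
    simp only [ho2def, ho1def] at h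
    split_ifs at h <;> first | exact ho1 _ _ h | exact (ho1 _ _ h).symm
  -- cardinality steps
  have card_step2 : ∀ x, (Finset.univ.filter fun y => o2 x y = true).card
      = (Finset.univ.filter fun y => o1 x y = true).card := by
    intro x
    by_cases hb : o w v = true
    · have heq : ∀ y ∈ Finset.univ, (o2 x y = true) ↔
          ((if s(x, y) ∈ cj.edges then o1 y x else o1 x y) = true) := by
        intro y _
        simp only [ho2def, hb, true_and]
      rw [Finset.filter_congr heq]
      exact flip_card horientj1 hfaj1 cj hcj x
    · have heq : ∀ y ∈ Finset.univ, (o2 x y = true) ↔ (o1 x y = true) := by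
        intro y _
        simp only [ho2def, hb, Bool.false_eq_true, false_and, if_false]
      rw [Finset.filter_congr heq]
  have card_step1 : ∀ x, (Finset.univ.filter fun y => o1 x y = true).card
      = (Finset.univ.filter fun y => o x y = true).card := by
    intro x
    by_cases hb : o u v = true
    · have heq : ∀ y ∈ Finset.univ, (o1 x y = true) ↔
          ((if s(x, y) ∈ ci.edges then o y x else o x y) = true) := by
        intro y _
        simp only [ho1def, hb, true_and]
      rw [Finset.filter_congr heq]
      exact flip_card horienti hfai ci hci x
    · have heq : ∀ y ∈ Finset.univ, (o1 x y = true) ↔ (o x y = true) := by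
        intro y _
        simp only [ho1def, hb, Bool.false_eq_true, false_and, if_false]
      rw [Finset.filter_congr heq]
  -- faithfulness on the old parts, for the new orientation
  have faithPi : ∀ x y y', s(x, y) ∈ P i → s(x, y') ∈ P i →
      o2 x y = true → o2 x y' = true → y = y' := by
    intro x y y' hm1 hm2 h1 h2
    rw [ho2_Pi x y hm1] at h1
    rw [ho2_Pi x y' hm2] at h2
    by_cases hb : o u v = true
    · simp only [ho1def, hb, true_and] at h1 h2
      exact flip_faith horienti hfai ci hci ((hHiadj x y).mpr hm1)
        ((hHiadj x y').mpr hm2) h1 h2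
    · simp only [ho1def, hb, Bool.false_eq_true, false_and, if_false] at h1 h2
      exact hfaith i x y y' h1 h2 hm1 hm2
  have faithPj : ∀ x y y', s(x, y) ∈ P j → s(x, y') ∈ P j →
      o2 x y = true → o2 x y' = true → y = y' := by
    intro x y y' hm1 hm2 h1 h2
    by_cases hb : o w v = true
    · simp only [ho2def, hb, true_and] at h1 h2
      exact flip_faith horientj1 hfaj1 cj hcj ((hHjadj x y).mpr hm1)
        ((hHjadj x y').mpr hm2) h1 h2
    · simp only [ho2def, hb, Bool.false_eq_true, false_and, if_false] at h1 h2
      rw [ho1_Pj x y hm1] at h1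
      rw [ho1_Pj x y' hm2] at h2
      exact hfaith j x y y' h1 h2 hm1 hm2
  -- values of the new orientation on the two special edges
  have ho2vu : o2 v u = true := by
    rw [ho2_off v u (by rw [hvu_eq]; exact huvnotcj)]
    simp only [ho1def]
    by_cases hb : o u v = true
    · rw [if_pos ⟨hb, by rw [hvu_eq]; exact huvci⟩]
      exact hb
    · rw [if_neg (fun hh => hb hh.1)]
      cases hbv : o v u with
      | true => rfl
      | false => exact absurd ((ho2 u v hGuv).mpr hbv) hb
  have ho2vw : o2 v w = true := by
    simp only [ho2def]
    by_cases hb : o w v = true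
    · rw [if_pos ⟨hb, hvwcj⟩, ho1_off w v (by rw [hwv_eq]; exact hvwnotci)]
      exact hb
    · rw [if_neg (fun hh => hb hh.1), ho1_off v w hvwnotci]
      cases hbv : o v w with
      | true => rfl
      | false => exact absurd ((ho2 w v hGvw.symm).mpr hbv) hb
  have ho2uv : o2 u v = false := by
    cases hb : o2 u v with
    | false => rfl
    | true =>
      have h3 := (hco2 u v hGuv).mp hb
      rw [ho2vu] at h3
      exact absurd h3 (by simp)
  have ho2wv : o2 w v = false := by
    cases hb : o2 w v with
    | false => rfl
    | true =>
      have h3 := (hco2 w v hGvw.symm).mp hb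
      rw [ho2vw] at h3
      exact absurd h3 (by simp)
  -- conjunct 4 : faithfulness for the new partition
  have hfaith2 : ∀ (l : Fin k) (x y y' : V), o2 x y = true → o2 x y' = true →
      s(x, y) ∈ P' l → s(x, y') ∈ P' l → y = y' := by
    intro l x y y' h1 h2 hm1 hm2
    rw [hP' l] at hm1 hm2
    by_cases hli : l = i
    · rw [if_pos hli] at hm1 hm2
      obtain ⟨hm1u, hm1n⟩ := hm1
      obtain ⟨hm2u, hm2n⟩ := hm2
      have resolve : ∀ yy, o2 x yy = true → s(x, yy) ∈ P i ∪ {s(v, w)} →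
          s(x, yy) ∈ P i ∨ (x = v ∧ yy = w) := by
        intro yy ho hm
        rcases hm with hm | hm
        · exact Or.inl hm
        · rw [Set.mem_singleton_iff] at hm
          rcases Sym2.eq_iff.mp hm with ⟨hx, hy⟩ | ⟨hx, hy⟩
          · exact Or.inr ⟨hx, hy⟩
          · subst hx; subst hy
            rw [ho2wv] at ho
            exact absurd ho (by simp)
      rcases resolve y h1 hm1u with hy | ⟨hxv, hyw⟩
      · rcases resolve y' h2 hm2u with hy' | ⟨hxv, hyw⟩
        · exact faithPi x y y' hy hy' h1 h2
        · exfalso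
          rw [hxv] at hy h1
          have hyu := faithPi v y u hy (by rw [hvu_eq]; exact huv) h1 ho2vu
          apply hm1n
          rw [Set.mem_singleton_iff, hxv, hyu, hvu_eq]
      · rcases resolve y' h2 hm2u with hy' | ⟨hxv', hyw'⟩
        · exfalso
          rw [hxv] at hy' h2
          have hyu := faithPi v y' u hy' (by rw [hvu_eq]; exact huv) h2 ho2vu
          apply hm2n
          rw [Set.mem_singleton_iff, hxv, hyu, hvu_eq]
        · exact hyw.trans hyw'.symm
    · by_cases hlj : l = j
      · rw [if_neg hli, if_pos hlj] at hm1 hm2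
        obtain ⟨hm1u, hm1n⟩ := hm1
        obtain ⟨hm2u, hm2n⟩ := hm2
        have resolve : ∀ yy, o2 x yy = true → s(x, yy) ∈ P j ∪ {s(u, v)} →
            s(x, yy) ∈ P j ∨ (x = v ∧ yy = u) := by
          intro yy ho hm
          rcases hm with hm | hm
          · exact Or.inl hm
          · rw [Set.mem_singleton_iff] at hm
            rcases Sym2.eq_iff.mp hm with ⟨hx, hy⟩ | ⟨hx, hy⟩
            · subst hx; subst hy
              rw [ho2uv] at ho
              exact absurd ho (by simp)
            · exact Or.inr ⟨hx, hy⟩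
        rcases resolve y h1 hm1u with hy | ⟨hxv, hyu⟩
        · rcases resolve y' h2 hm2u with hy' | ⟨hxv, hyu⟩
          · exact faithPj x y y' hy hy' h1 h2
          · exfalso
            rw [hxv] at hy h1
            have hyw := faithPj v y w hy hvw h1 ho2vw
            apply hm1n
            rw [Set.mem_singleton_iff, hxv, hyw]
        · rcases resolve y' h2 hm2u with hy' | ⟨hxv', hyu'⟩
          · exfalso
            rw [hxv] at hy' h2
            have hyw := faithPj v y' w hy' hvw h2 ho2vw
            apply hm2n
            rw [Set.mem_singleton_iff, hxv, hyw]
          · exact hyu.trans hyu'.symm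
      · rw [if_neg hli, if_neg hlj] at hm1 hm2
        have e1 : ∀ yy, s(x, yy) ∈ P l → o2 x yy = o x yy := by
          intro yy hm
          rw [ho2_off x yy (fun hh => hdisj j l (fun hh2 => hlj hh2.symm) _ (hcjP _ hh) hm),
            ho1_off x yy (fun hh => hdisj i l (fun hh2 => hli hh2.symm) _ (hciP _ hh) hm)]
        rw [e1 y hm1] at h1
        rw [e1 y' hm2] at h2
        exact hfaith l x y y' h1 h2 hm1 hm2
  -- the new parts consist of edges of G
  have hsub' : ∀ l : Fin k, P' l ⊆ G.edgeSet := by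
    intro l e he
    rw [hP' l] at he
    by_cases hli : l = i
    · rw [if_pos hli] at he
      rcases he.1 with h | h
      · exact hPsub i h
      · rw [Set.mem_singleton_iff] at h
        rw [h]
        exact hPsub j hvw
    · by_cases hlj : l = j
      · rw [if_neg hli, if_pos hlj] at he
        rcases he.1 with h | h
        · exact hPsub j h
        · rw [Set.mem_singleton_iff] at h
          rw [h]
          exact hPsub i huv
      · rw [if_neg hli, if_neg hlj] at he
        exact hPsub l he
  refine ⟨o2, hco1, hco2, fun x => (card_step2 x).trans (card_step1 x), hfaith2, ?_⟩
  intro l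
  apply pseudo_of (f := o2)
  · intro x y hxy
    rw [SimpleGraph.fromEdgeSet_adj] at hxy
    exact hco2 x y (G.mem_edgeSet.mp (hsub' l hxy.1))
  · intro x y y' hxy hxy' h1 h2
    rw [SimpleGraph.fromEdgeSet_adj] at hxy hxy'
    exact hfaith2 l x y y' h1 h2 hxy.1 hxy'.1
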